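/- Let a > 1 and λ = 1/2 − 1/(2a) ∈ (0,1/2). For every x ≥ a, every integer n ≥ 1, and every integer p ≥ 1, one has (log n)^p / n^{λx} ≤ p^p / (λ e x)^p (interpreting the left side as 0 when n = 1). Consequently, the p-th derivative of the Riemann zeta function satisfies, for all x ≥ a and p ≥ 1, |ζ^{(p)}(x)| ≤ (ζ((a+1)/2)/(λe))^p · p^p / x^p. -/

import Mathlib

/-- The real Riemann zeta function `ζ(x) = ∑_{n ≥ 1} n^{-x}`. -/
noncomputable def realZeta (x : ℝ) : ℝ := ∑' n : ℕ, ((n : ℝ) + 1) ^ (-x)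

open Real

lemma aux_pow_le_exp (c t : ℝ) (hc : 0 < c) (ht : 0 ≤ t) (p : ℕ) (hp : 1 ≤ p) :
    t ^ p ≤ ((p : ℝ) / (c * Real.exp 1)) ^ p * Real.exp (c * t) := by
  have hp0 : (0:ℝ) < p := by exact_mod_cast Nat.lt_of_lt_of_le Nat.zero_lt_one hp
  have he : (0:ℝ) < Real.exp 1 := Real.exp_pos 1
  set u := c * t / p with hu
  have hu0 : 0 ≤ u := by positivity
  have h1 : u * Real.exp 1 ≤ Real.exp u := by
    calc u * Real.exp 1 = (u - 1 + 1) * Real.exp 1 := by ring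
      _ ≤ Real.exp (u - 1) * Real.exp 1 :=
          mul_le_mul_of_nonneg_right (Real.add_one_le_exp _) he.le
      _ = Real.exp u := by rw [← Real.exp_add]; ring_nf
  have h2 : (u * Real.exp 1) ^ p ≤ Real.exp (c * t) := by
    have h3 := pow_le_pow_left₀ (by positivity) h1 p
    have h4 : Real.exp u ^ p = Real.exp (c * t) := by
      rw [← Real.exp_nat_mul, hu]
      congr 1
      field_simp
    rwa [h4] at h3
  calc t ^ p = (u * Real.exp 1) ^ p * ((p : ℝ) / (c * Real.exp 1)) ^ p := by
        rw [← mul_pow]; congr 1; rw [hu]; field_simp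
    _ ≤ Real.exp (c * t) * ((p : ℝ) / (c * Real.exp 1)) ^ p :=
        mul_le_mul_of_nonneg_right h2 (by positivity)
    _ = _ := mul_comm _ _

lemma aux_summable_base (c : ℝ) (hc : 1 < c) :
    Summable (fun n : ℕ => ((n : ℝ) + 1) ^ (-c)) := by
  have h : Summable (fun n : ℕ => (n : ℝ) ^ (-c)) :=
    Real.summable_nat_rpow.mpr (by linarith)
  have h2 := (summable_nat_add_iff 1).mpr h
  refine h2.congr fun n => ?_
  push_cast
  ring_nf

lemma aux_summable (p : ℕ) (c : ℝ) (hc : 1 < c) :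
    Summable (fun n : ℕ => Real.log ((n : ℝ) + 1) ^ p * ((n : ℝ) + 1) ^ (-c)) := by
  rcases Nat.eq_zero_or_pos p with rfl | hp
  · simpa using aux_summable_base c hc
  set c' := (1 + c) / 2 with hc'
  have hc'1 : 1 < c' := by rw [hc']; linarith
  have hδ : 0 < c - c' := by rw [hc']; linarith
  set K := ((p : ℝ) / ((c - c') * Real.exp 1)) ^ p with hK
  refine Summable.of_nonneg_of_le (fun n => ?_) (fun n => ?_)
    ((aux_summable_base c' hc'1).mul_left K)
  · have h1 : (0:ℝ) < (n : ℝ) + 1 := by positivity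
    have h2 : (0:ℝ) ≤ Real.log ((n : ℝ) + 1) := Real.log_nonneg (by linarith)
    positivity
  · have hm : (0:ℝ) < (n : ℝ) + 1 := by positivity
    have h2 : (0:ℝ) ≤ Real.log ((n : ℝ) + 1) := Real.log_nonneg (by linarith)
    have h3 := aux_pow_le_exp (c - c') (Real.log ((n:ℝ)+1)) hδ h2 p hp
    have h4 : Real.exp ((c - c') * Real.log ((n:ℝ)+1)) = ((n:ℝ)+1) ^ (c - c') := by
      rw [Real.rpow_def_of_pos hm, mul_comm]
    rw [h4] at h3
    calc Real.log ((n:ℝ)+1) ^ p * ((n:ℝ)+1) ^ (-c)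
        ≤ (K * ((n:ℝ)+1) ^ (c - c')) * ((n:ℝ)+1) ^ (-c) := by
          apply mul_le_mul_of_nonneg_right h3 (Real.rpow_nonneg hm.le _)
      _ = K * ((n:ℝ)+1) ^ (-c') := by
          rw [mul_assoc, ← Real.rpow_add hm]; ring_nf

lemma aux_iteratedDeriv (p : ℕ) : ∀ x : ℝ, 1 < x →
    iteratedDeriv p realZeta x
      = ∑' n : ℕ, (-Real.log ((n : ℝ) + 1)) ^ p * ((n : ℝ) + 1) ^ (-x) := by
  induction p with
  | zero => intro x hx; simp [realZeta]
  | succ p ih =>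
    intro x hx
    rw [iteratedDeriv_succ]
    have hEq : iteratedDeriv p realZeta =ᶠ[nhds x]
        fun y => ∑' n : ℕ, (-Real.log ((n : ℝ) + 1)) ^ p * ((n : ℝ) + 1) ^ (-y) := by
      filter_upwards [Ioi_mem_nhds hx] with y hy
      exact ih y hy
    rw [hEq.deriv_eq]
    set c := (1 + x) / 2 with hcdef
    have hc1 : 1 < c := by rw [hcdef]; linarith
    have hcx : c < x := by rw [hcdef]; linarith
    have H : HasDerivAt
        (fun y => ∑' n : ℕ, (-Real.log ((n : ℝ) + 1)) ^ p * ((n : ℝ) + 1) ^ (-y))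
        (∑' n : ℕ, (-Real.log ((n : ℝ) + 1)) ^ (p + 1) * ((n : ℝ) + 1) ^ (-x)) x := by
      refine hasDerivAt_tsum_of_isPreconnected
        (u := fun n : ℕ => Real.log ((n : ℝ) + 1) ^ (p + 1) * ((n : ℝ) + 1) ^ (-c))
        (g' := fun (n : ℕ) (y : ℝ) => (-Real.log ((n : ℝ) + 1)) ^ (p + 1) * ((n : ℝ) + 1) ^ (-y))
        (aux_summable (p + 1) c hc1) isOpen_Ioi isPreconnected_Ioi
        (fun n y hy => ?_) (fun n y hy => ?_) hcx ?_ hcx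
      · have hm : (0:ℝ) < (n : ℝ) + 1 := by positivity
        have h1 : HasDerivAt (fun y : ℝ => ((n : ℝ) + 1) ^ (-y))
            (((n : ℝ) + 1) ^ (-y) * Real.log ((n : ℝ) + 1) * (-1)) y := by
          exact ((Real.hasStrictDerivAt_const_rpow hm (-y)).hasDerivAt).comp y
            (hasDerivAt_neg y)
        have h2 := h1.const_mul ((-Real.log ((n : ℝ) + 1)) ^ p)
        convert h2 using 1
        · rfl
        ring
      · have hm : (1:ℝ) ≤ (n : ℝ) + 1 := le_add_of_nonneg_left n.cast_nonneg
        have h2 : (0:ℝ) ≤ Real.log ((n : ℝ) + 1) := Real.log_nonneg hm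
        rw [Real.norm_eq_abs, abs_mul, abs_pow, abs_neg, abs_of_nonneg h2,
          abs_of_nonneg (Real.rpow_nonneg (by linarith) _)]
        exact mul_le_mul_of_nonneg_left
          (Real.rpow_le_rpow_of_exponent_le hm (by linarith [le_of_lt (show c < y from hy)]))
          (pow_nonneg h2 _)
      · refine ((aux_summable p x hx).mul_left ((-1:ℝ) ^ p)).congr fun n => ?_
        rw [neg_pow]; ring
    rw [H.deriv]


/-- Let `a > 1` and `λ = 1/2 − 1/(2a)`.  Then for `x ≥ a`, `n ≥ 1` and `p ≥ 1`,
`(log n)^p / n^{λx} ≤ p^p / (λ e x)^p`; consequently the `p`-th derivative of the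
Riemann zeta function satisfies `|ζ^{(p)}(x)| ≤ (ζ((a+1)/2)/(λ e))^p p^p / x^p`. -/
theorem zeta_deriv_bound (a : ℝ) (ha : 1 < a) :
    (∀ x ≥ a, ∀ n : ℕ, 1 ≤ n → ∀ p : ℕ, 1 ≤ p →
      Real.log n ^ p / (n : ℝ) ^ ((1 / 2 - 1 / (2 * a)) * x) ≤
        (p : ℝ) ^ p / ((1 / 2 - 1 / (2 * a)) * Real.exp 1 * x) ^ p) ∧
    (∀ x ≥ a, ∀ p : ℕ, 1 ≤ p →
      |iteratedDeriv p realZeta x| ≤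
        (realZeta ((a + 1) / 2) / ((1 / 2 - 1 / (2 * a)) * Real.exp 1)) ^ p *
          (p : ℝ) ^ p / x ^ p) := by

  set l : ℝ := 1 / 2 - 1 / (2 * a) with hl
  have ha0 : 0 < a := by linarith
  have hl0 : 0 < l := by
    rw [hl]
    have : 1 / (2 * a) < 1 / 2 := by
      apply one_div_lt_one_div_of_lt <;> linarith
    linarith
  have part1 : ∀ x ≥ a, ∀ n : ℕ, 1 ≤ n → ∀ p : ℕ, 1 ≤ p →
      Real.log n ^ p / (n : ℝ) ^ (l * x) ≤ (p : ℝ) ^ p / (l * Real.exp 1 * x) ^ p := by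
    intro x hx n hn p hp
    have hx0 : 0 < x := by linarith
    have hc : 0 < l * x := by positivity
    have hn1 : (1:ℝ) ≤ n := by exact_mod_cast hn
    have ht : 0 ≤ Real.log n := Real.log_nonneg hn1
    have key := aux_pow_le_exp (l * x) (Real.log n) hc ht p hp
    have hrp : (n : ℝ) ^ (l * x) = Real.exp (l * x * Real.log n) := by
      rw [Real.rpow_def_of_pos (by linarith), mul_comm]
    rw [hrp, div_le_iff₀ (Real.exp_pos _)]
    have heq : (p : ℝ) ^ p / (l * Real.exp 1 * x) ^ p
        = ((p : ℝ) / (l * x * Real.exp 1)) ^ p := by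
      rw [div_pow]; congr 1; ring
    rw [heq]
    exact key
  refine ⟨part1, ?_⟩
  intro x hx p hp
  have hx1 : 1 < x := lt_of_lt_of_le ha hx
  have hx0 : 0 < x := by linarith
  set b : ℝ := (a + 1) / 2 with hb
  have hb1 : 1 < b := by rw [hb]; linarith
  have h1l0 : 0 < 1 - l := by
    rw [hl]
    have h2a : 0 < 1 / (2 * a) := by positivity
    linarith
  have hba : (1 - l) * a = b := by rw [hl, hb]; field_simp; ring
  have hbx : b ≤ (1 - l) * x := by nlinarith
  have hζsum := aux_summable_base b hb1
  have hζ1 : 1 ≤ realZeta b := by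
    have h0 := Summable.le_tsum hζsum 0 (fun i _ => Real.rpow_nonneg (by positivity) _)
    simpa [realZeta] using h0
  rw [aux_iteratedDeriv p x hx1]
  set K : ℝ := (p : ℝ) ^ p / (l * Real.exp 1 * x) ^ p with hKdef
  have hK0 : 0 ≤ K := by positivity
  have habs : Summable (fun n : ℕ => Real.log ((n:ℝ)+1) ^ p * ((n:ℝ)+1) ^ (-x)) :=
    aux_summable p x hx1
  have hnorm : ∀ n : ℕ, ‖(-Real.log ((n:ℝ)+1)) ^ p * ((n:ℝ)+1) ^ (-x)‖
      = Real.log ((n:ℝ)+1) ^ p * ((n:ℝ)+1) ^ (-x) := by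
    intro n
    have hm : (1:ℝ) ≤ (n:ℝ)+1 := le_add_of_nonneg_left n.cast_nonneg
    rw [Real.norm_eq_abs, abs_mul, abs_pow, abs_neg,
      abs_of_nonneg (Real.log_nonneg hm), abs_of_nonneg (Real.rpow_nonneg (by linarith) _)]
  have h1 : |∑' n : ℕ, (-Real.log ((n:ℝ)+1)) ^ p * ((n:ℝ)+1) ^ (-x)|
      ≤ ∑' n : ℕ, Real.log ((n:ℝ)+1) ^ p * ((n:ℝ)+1) ^ (-x) := by
    have h := norm_tsum_le_tsum_norm
      (f := fun n : ℕ => (-Real.log ((n:ℝ)+1)) ^ p * ((n:ℝ)+1) ^ (-x))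
      (habs.congr fun n => (hnorm n).symm)
    rw [Real.norm_eq_abs] at h
    simpa only [hnorm] using h
  have hterm : ∀ n : ℕ, Real.log ((n:ℝ)+1) ^ p * ((n:ℝ)+1) ^ (-x) ≤ K * ((n:ℝ)+1) ^ (-b) := by
    intro n
    have hm : (1:ℝ) ≤ (n:ℝ)+1 := le_add_of_nonneg_left n.cast_nonneg
    have hm0 : (0:ℝ) < (n:ℝ)+1 := by linarith
    have hsplit : ((n:ℝ)+1) ^ (-x) = (((n:ℝ)+1) ^ (l*x))⁻¹ * ((n:ℝ)+1) ^ (-((1-l)*x)) := by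
      rw [← Real.rpow_neg hm0.le, ← Real.rpow_add hm0]; congr 1; ring
    have hp1 := part1 x hx (n+1) (Nat.le_add_left 1 n) p hp
    push_cast at hp1
    calc Real.log ((n:ℝ)+1) ^ p * ((n:ℝ)+1) ^ (-x)
        = (Real.log ((n:ℝ)+1) ^ p / ((n:ℝ)+1) ^ (l*x)) * ((n:ℝ)+1) ^ (-((1-l)*x)) := by
          rw [hsplit]; ring
      _ ≤ K * ((n:ℝ)+1) ^ (-((1-l)*x)) :=
          mul_le_mul_of_nonneg_right hp1 (Real.rpow_nonneg hm0.le _)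
      _ ≤ K * ((n:ℝ)+1) ^ (-b) :=
          mul_le_mul_of_nonneg_left
            (Real.rpow_le_rpow_of_exponent_le hm (by linarith)) hK0
  have h2 : (∑' n : ℕ, Real.log ((n:ℝ)+1) ^ p * ((n:ℝ)+1) ^ (-x)) ≤ K * realZeta b := by
    rw [realZeta, ← tsum_mul_left]
    exact Summable.tsum_le_tsum hterm habs (hζsum.mul_left K)
  refine le_trans (le_trans h1 h2) ?_
  have hfin : (realZeta b / (l * Real.exp 1)) ^ p * (p:ℝ)^p / x^p = realZeta b ^ p * K := by
    rw [hKdef, div_pow, mul_pow (l * Real.exp 1) x, div_mul_eq_mul_div, div_div, mul_div_assoc]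
  rw [hfin]
  have hζp : realZeta b ≤ realZeta b ^ p := le_self_pow₀ hζ1 (by omega)
  nlinarith [hK0, hζp]
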